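/- Let k be a field, n ≥ 1, R an associative unital k-algebra, and ι : Mat_n(k) → R a unital k-algebra homomorphism. Let C = { r ∈ R : r · ι(m) = ι(m) · r for all m ∈ Mat_n(k) } be the centralizer of the image of ι, a k-subalgebra of R. Then the map Mat_n(k) ⊗_k C → R determined by m ⊗ r ↦ ι(m) · r is an isomorphism of k-algebras, where Mat_n(k) ⊗_k C carries the tensor product algebra structure. -/

import Mathlib

open TensorProduct

section Aux
variable {k : Type*} [Field k] {n : ℕ} {R : Type*} [Ring R] [Algebra k R]
  (ι : Matrix (Fin n) (Fin n) k →ₐ[k] R)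

/-- Images of matrix units. -/
noncomputable def matCentE (i j : Fin n) : R := ι (Matrix.single i j 1)

lemma matCentE_mul_same (i j l : Fin n) :
    matCentE ι i j * matCentE ι j l = matCentE ι i l := by
  rw [matCentE, matCentE, matCentE, ← map_mul, Matrix.single_mul_single_same, one_mul]

lemma matCentE_mul_ne (i j p q : Fin n) (h : j ≠ p) :
    matCentE ι i j * matCentE ι p q = 0 := by
  rw [matCentE, matCentE, ← map_mul, Matrix.single_mul_single_of_ne (h := h), map_zero]

lemma sum_stdBasis_diag : (∑ i : Fin n, Matrix.single i i (1 : k)) = 1 := by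
  ext a b
  by_cases h : a = b
  · subst h
    simp [Matrix.sum_apply, Matrix.single, Matrix.one_apply]
  · rw [Matrix.sum_apply, Matrix.one_apply, if_neg h, Finset.sum_eq_zero]
    intro i _
    rw [Matrix.single_apply_of_ne]
    rintro ⟨rfl, rfl⟩
    exact h rfl

lemma sum_matCentE : (∑ i : Fin n, matCentE ι i i) = 1 := by
  simp only [matCentE, ← map_sum, sum_stdBasis_diag, map_one]

/-- The candidate centralizer element. -/
noncomputable def matCentC (r : R) (i j : Fin n) : R :=
  ∑ l, matCentE ι l i * r * matCentE ι j l

lemma matCentE_mul_matCentC (p q i j : Fin n) (r : R) :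
    matCentE ι p q * matCentC ι r i j = matCentE ι p i * r * matCentE ι j q := by
  rw [matCentC, Finset.mul_sum,
    Finset.sum_eq_single_of_mem q (Finset.mem_univ q) (fun l _ hl => by
      simp only [← mul_assoc]
      rw [matCentE_mul_ne ι p q l i (Ne.symm hl)]
      simp)]
  simp only [← mul_assoc, matCentE_mul_same]

lemma matCentC_mul_matCentE (p q i j : Fin n) (r : R) :
    matCentC ι r i j * matCentE ι p q = matCentE ι p i * r * matCentE ι j q := by
  rw [matCentC, Finset.sum_mul,
    Finset.sum_eq_single_of_mem p (Finset.mem_univ p) (fun l _ hl => by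
      rw [mul_assoc, matCentE_mul_ne ι j l p q hl]
      simp)]
  rw [mul_assoc, matCentE_mul_same]

lemma matCentC_mem (r : R) (i j : Fin n) :
    matCentC ι r i j ∈ Subalgebra.centralizer k (Set.range ι) := by
  rw [Subalgebra.mem_centralizer_iff]
  rintro _ ⟨m, rfl⟩
  rw [Matrix.matrix_eq_sum_single m, map_sum, Finset.sum_mul, Finset.mul_sum]
  refine Finset.sum_congr rfl fun p _ => ?_
  rw [map_sum, Finset.sum_mul, Finset.mul_sum]
  refine Finset.sum_congr rfl fun q _ => ?_
  have : Matrix.single p q (m p q) = m p q • Matrix.single p q (1 : k) := by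
    rw [Matrix.smul_single, smul_eq_mul, mul_one]
  rw [this, map_smul, smul_mul_assoc, mul_smul_comm]
  congr 1
  exact (matCentE_mul_matCentC ι p q i j r).trans (matCentC_mul_matCentE ι p q i j r).symm
end Aux

set_option synthInstance.maxHeartbeats 400000 in
set_option maxHeartbeats 1000000 in
theorem matrix_tensor_centralizer_iso
    (k : Type*) [Field k] (n : ℕ) (hn : 1 ≤ n)
    (R : Type*) [Ring R] [Algebra k R]
    (ι : Matrix (Fin n) (Fin n) k →ₐ[k] R) :
    ∃ e : (Matrix (Fin n) (Fin n) k) ⊗[k]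
        (Subalgebra.centralizer k (Set.range ι) : Subalgebra k R) ≃ₐ[k] R,
      ∀ (m : Matrix (Fin n) (Fin n) k)
        (r : (Subalgebra.centralizer k (Set.range ι) : Subalgebra k R)),
        e (m ⊗ₜ[k] r) = ι m * (r : R) := by
  classical
  set C := Subalgebra.centralizer k (Set.range ι) with hC
  have hcomm : ∀ (m : Matrix (Fin n) (Fin n) k) (c : C), Commute (ι m) (c.1) := by
    intro m c
    exact (Subalgebra.mem_centralizer_iff k |>.mp c.2 (ι m) ⟨m, rfl⟩)
  set φ : (Matrix (Fin n) (Fin n) k) ⊗[k] C →ₐ[k] R :=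
    Algebra.TensorProduct.lift ι C.val (fun m c => hcomm m c) with hφ
  have hφ_tmul : ∀ (m : Matrix (Fin n) (Fin n) k) (c : C),
      φ (m ⊗ₜ[k] c) = ι m * (c : R) := fun m c =>
    Algebra.TensorProduct.lift_tmul _ _ _ _ _
  -- inverse function
  set ψ : R → (Matrix (Fin n) (Fin n) k) ⊗[k] C := fun r =>
    ∑ i, ∑ j, Matrix.single i j (1 : k) ⊗ₜ[k]
      (⟨matCentC ι r i j, matCentC_mem ι r i j⟩ : C) with hψ
  have ψ_add : ∀ a b : R, ψ (a + b) = ψ a + ψ b := by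
    intro a b
    rw [hψ]
    simp only [← Finset.sum_add_distrib]
    refine Finset.sum_congr rfl fun i _ => Finset.sum_congr rfl fun j _ => ?_
    rw [← TensorProduct.tmul_add]
    congr 1
    ext
    simp [matCentC, mul_add, add_mul, Finset.sum_add_distrib]
  have hφψ : ∀ r : R, φ (ψ r) = r := by
    intro r
    rw [hψ]
    simp only [map_sum, hφ_tmul]
    have : ∀ i j : Fin n, matCentE ι i j * matCentC ι r i j
        = matCentE ι i i * r * matCentE ι j j := fun i j =>
      matCentE_mul_matCentC ι i j i j r
    calc (∑ i, ∑ j, ι (Matrix.single i j 1) *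
            ((⟨matCentC ι r i j, matCentC_mem ι r i j⟩ : C) : R))
        = ∑ i, ∑ j, matCentE ι i i * r * matCentE ι j j := by
          refine Finset.sum_congr rfl fun i _ => Finset.sum_congr rfl fun j _ => this i j
      _ = (∑ i, matCentE ι i i) * r * (∑ j, matCentE ι j j) := by
          simp only [Finset.sum_mul, Finset.mul_sum, mul_assoc]
          rw [Finset.sum_comm]
      _ = r := by rw [sum_matCentE, one_mul, mul_one]
  have hψφ : ∀ x, ψ (φ x) = x := by
    intro x
    induction x using TensorProduct.induction_on with
    | zero =>
        rw [map_zero]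
        have : ψ 0 + ψ 0 = ψ 0 + 0 := by rw [← ψ_add, add_zero, add_zero]
        exact add_left_cancel this
    | tmul m c =>
        rw [hφ_tmul, hψ]
        have key : ∀ i j : Fin n, matCentC ι (ι m * (c : R)) i j = m i j • (c : R) := by
          intro i j
          rw [matCentC]
          have step : ∀ l : Fin n, matCentE ι l i * (ι m * (c : R)) * matCentE ι j l
              = (matCentE ι l i * ι m * matCentE ι j l) * (c : R) := by
            intro l
            have hc : (c : R) * matCentE ι j l = matCentE ι j l * (c : R) :=
              (hcomm _ c).symm.eq
            rw [← mul_assoc (matCentE ι l i) (ι m) (c : R),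
              mul_assoc (matCentE ι l i * ι m) (c : R), hc, ← mul_assoc]
          rw [Finset.sum_congr rfl fun l _ => step l, ← Finset.sum_mul]
          have : (∑ l, matCentE ι l i * ι m * matCentE ι j l)
              = algebraMap k R (m i j) := by
            simp only [matCentE, ← map_mul, ← map_sum]
            have : (∑ l, Matrix.single l i (1:k) * m * Matrix.single j l 1)
                = m i j • (1 : Matrix (Fin n) (Fin n) k) := by
              ext a b
              by_cases h : a = b
              · simp [Matrix.sum_apply, Matrix.mul_apply, Matrix.single,
                  Matrix.one_apply, h, Finset.sum_ite_eq, ite_and, Matrix.smul_apply]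
              · simp [Matrix.sum_apply, Matrix.mul_apply, Matrix.single,
                  Matrix.one_apply, h, Finset.sum_ite_eq, ite_and, Matrix.smul_apply]
                exact fun hba => absurd hba.symm h
            rw [this, map_smul, map_one, Algebra.smul_def, mul_one]
          rw [this, Algebra.smul_def]
        have : ∀ i j : Fin n,
            (⟨matCentC ι (ι m * (c : R)) i j, matCentC_mem ι _ i j⟩ : C) = m i j • c := by
          intro i j
          ext
          exact key i j
        calc (∑ i, ∑ j, Matrix.single i j (1:k) ⊗ₜ[k]
                (⟨matCentC ι (ι m * (c : R)) i j, matCentC_mem ι _ i j⟩ : C))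
            = ∑ i, ∑ j, Matrix.single i j (m i j) ⊗ₜ[k] c := by
              refine Finset.sum_congr rfl fun i _ => Finset.sum_congr rfl fun j _ => ?_
              rw [this i j, TensorProduct.tmul_smul, TensorProduct.smul_tmul',
                Matrix.smul_single, smul_eq_mul, mul_one]
          _ = (∑ i, ∑ j, Matrix.single i j (m i j)) ⊗ₜ[k] c := by
              simp only [TensorProduct.sum_tmul]
          _ = m ⊗ₜ[k] c := by rw [← Matrix.matrix_eq_sum_single]
    | add x y hx hy =>
        rw [map_add, ψ_add, hx, hy]
  refine ⟨AlgEquiv.ofBijective φ ⟨fun a b h => ?_, fun r => ⟨ψ r, hφψ r⟩⟩, fun m c => hφ_tmul m c⟩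
  rw [← hψφ a, ← hψφ b, h]
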